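/- For every n ∈ ℕ and all X ≥ 0, one has T_n(X) ≥ 1/2. -/

import Mathlib

open MeasureTheory

noncomputable section

/-- The `n`-th Laguerre polynomial `L_n(x) = Σ_{k=0}^n (n choose k) (−x)^k / k!`. -/
def laguerreFun (n : ℕ) (x : ℝ) : ℝ :=
  ∑ k ∈ Finset.range (n + 1), (n.choose k : ℝ) * (-x) ^ k / (k.factorial : ℝ)

/-- `T_n(X) = Σ_{k=0}^{n−1} (−1)^k L_k(X) + ((−1)^n/2) L_n(X)`. -/
def Tfun (n : ℕ) (X : ℝ) : ℝ :=
  (∑ k ∈ Finset.range n, (-1 : ℝ) ^ k * laguerreFun k X) +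
    (-1 : ℝ) ^ n / 2 * laguerreFun n X

/-- `V_α(X) = 4 e^{−X/2} Σ_{k=0}^{d−1} C(d−1,k) T_{|α|+k}(X)`. -/
def Vfun (d : ℕ) (α : Fin d → ℕ) (X : ℝ) : ℝ :=
  4 * Real.exp (-X / 2) *
    ∑ k ∈ Finset.range d, ((d - 1).choose k : ℝ) * Tfun ((∑ j, α j) + k) X


namespace TAux

open Finset Polynomial

/-- formal derivative of `laguerreFun n`. -/
def dL (n : ℕ) (x : ℝ) : ℝ :=
  -∑ k ∈ Finset.range n, (n.choose (k+1) : ℝ) * (-x) ^ k / (k.factorial : ℝ)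

lemma dL_zero (x : ℝ) : dL 0 x = 0 := by simp [dL]

lemma laguerre_zero_fun (x : ℝ) : laguerreFun 0 x = 1 := by simp [laguerreFun]

lemma laguerre_at_zero (n : ℕ) : laguerreFun n 0 = 1 := by
  rw [laguerreFun]
  rw [Finset.sum_eq_single_of_mem 0 (Finset.mem_range.2 (Nat.succ_pos n))]
  · simp
  · intro k _ hk
    simp [zero_pow hk]

lemma hasDerivAt_laguerre (n : ℕ) (x : ℝ) :
    HasDerivAt (fun y => laguerreFun n y) (dL n x) x := by
  have h : HasDerivAt (fun y => laguerreFun n y)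
      (∑ k ∈ Finset.range (n+1),
        (n.choose k : ℝ) * ((k : ℝ) * (-x) ^ (k-1) * (-1)) / (k.factorial : ℝ)) x := by
    apply HasDerivAt.fun_sum
    intro k _
    have hneg : HasDerivAt (fun y : ℝ => -y) (-1) x := (hasDerivAt_id x).neg
    exact ((hneg.pow k).const_mul ((n.choose k : ℝ))).div_const _
  have hsum : (∑ k ∈ Finset.range (n+1),
      (n.choose k : ℝ) * ((k : ℝ) * (-x) ^ (k-1) * (-1)) / (k.factorial : ℝ)) = dL n x := by
    rw [Finset.sum_range_succ']
    simp only [Nat.cast_zero, zero_mul, mul_zero, zero_div, add_zero]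
    rw [dL, ← Finset.sum_neg_distrib]
    apply Finset.sum_congr rfl
    intro k _
    have hfac : (((k+1).factorial : ℕ) : ℝ) = ((k:ℝ)+1) * (k.factorial : ℝ) := by
      rw [Nat.factorial_succ]; push_cast; ring
    have hf : (k.factorial : ℝ) ≠ 0 := by positivity
    rw [hfac]
    push_cast
    field_simp
  rw [← hsum]
  exact h

lemma dL_succ (n : ℕ) (x : ℝ) : dL (n+1) x = dL n x - laguerreFun n x := by
  rw [dL, dL, laguerreFun]
  have key : ∀ k ∈ Finset.range (n+1),
      ((n+1).choose (k+1) : ℝ) * (-x) ^ k / (k.factorial : ℝ)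
      = (n.choose (k+1) : ℝ) * (-x) ^ k / (k.factorial : ℝ)
        + (n.choose k : ℝ) * (-x) ^ k / (k.factorial : ℝ) := by
    intro k _
    rw [Nat.choose_succ_succ n k]
    push_cast
    ring
  rw [Finset.sum_congr rfl key, Finset.sum_add_distrib]
  have h2 : ∑ k ∈ Finset.range (n+1), (n.choose (k+1) : ℝ) * (-x) ^ k / (k.factorial : ℝ)
      = ∑ k ∈ Finset.range n, (n.choose (k+1) : ℝ) * (-x) ^ k / (k.factorial : ℝ) := by
    rw [Finset.sum_range_succ]
    simp
  rw [h2]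
  ring

end TAux

namespace TAux2
open Finset TAux

def Afun (n : ℕ) (x : ℝ) : ℝ := ∑ k ∈ Finset.range (n+1), (-1:ℝ)^k * laguerreFun k x
def dA (n : ℕ) (x : ℝ) : ℝ := ∑ k ∈ Finset.range (n+1), (-1:ℝ)^k * dL k x

lemma hasDerivAt_Afun (n : ℕ) (x : ℝ) :
    HasDerivAt (fun y => Afun n y) (dA n x) x := by
  apply HasDerivAt.fun_sum
  intro k _
  exact (hasDerivAt_laguerre k x).const_mul _

lemma Afun_succ (n : ℕ) (x : ℝ) :
    Afun (n+1) x = Afun n x + (-1:ℝ)^(n+1) * laguerreFun (n+1) x := by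
  rw [Afun, Afun, Finset.sum_range_succ]

lemma dA_succ_sum (n : ℕ) (x : ℝ) :
    dA (n+1) x = dA n x + (-1:ℝ)^(n+1) * dL (n+1) x := by
  rw [dA, dA, Finset.sum_range_succ]

lemma dA_zero (x : ℝ) : dA 0 x = 0 := by simp [dA, dL_zero]

lemma Afun_zero' (x : ℝ) : Afun 0 x = 1 := by simp [Afun, laguerre_zero_fun]

/-- key derivative recursion: `A_{n+1}' = A_n - A_n'`. -/
lemma dA_rec : ∀ n : ℕ, ∀ x : ℝ, dA (n+1) x = Afun n x - dA n x := by
  intro n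
  induction n with
  | zero =>
    intro x
    rw [dA_succ_sum, dA_zero, Afun_zero', dL_succ, dL_zero, laguerre_zero_fun]
    ring
  | succ n ih =>
    intro x
    rw [dA_succ_sum (n+1), dL_succ (n+1), Afun_succ n]
    linear_combination (ih x) + dA_succ_sum n x

def dT (n : ℕ) (x : ℝ) : ℝ :=
  (∑ k ∈ Finset.range n, (-1:ℝ)^k * dL k x) + (-1:ℝ)^n/2 * dL n x

lemma hasDerivAt_Tfun (n : ℕ) (x : ℝ) :
    HasDerivAt (fun y => Tfun n y) (dT n x) x := by
  apply HasDerivAt.add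
  · apply HasDerivAt.fun_sum
    intro k _
    exact (hasDerivAt_laguerre k x).const_mul _
  · exact (hasDerivAt_laguerre n x).const_mul _

lemma dT_zero (x : ℝ) : dT 0 x = 0 := by simp [dT, dL_zero]

lemma dT_succ_sum (n : ℕ) (x : ℝ) : dT (n+1) x
    = dT n x + (-1:ℝ)^n/2 * dL n x + (-1:ℝ)^(n+1)/2 * dL (n+1) x := by
  rw [dT, dT, Finset.sum_range_succ]
  ring

lemma dT_succ : ∀ n : ℕ, ∀ x : ℝ, dT (n+1) x = Afun n x / 2 := by
  intro n
  induction n with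
  | zero =>
    intro x
    rw [dT_succ_sum, dT_zero, dL_zero, dL_succ, dL_zero, laguerre_zero_fun, Afun_zero']
    ring
  | succ n ih =>
    intro x
    rw [dT_succ_sum (n+1), ih x, dL_succ (n+1), Afun_succ n]
    ring

lemma Tfun_succ (n : ℕ) (x : ℝ) : Tfun (n+1) x
    = Tfun n x + (-1:ℝ)^n/2 * laguerreFun n x + (-1:ℝ)^(n+1)/2 * laguerreFun (n+1) x := by
  rw [Tfun, Tfun, Finset.sum_range_succ]
  ring

lemma Tfun_at_zero : ∀ n : ℕ, Tfun n 0 = 1/2 := by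
  intro n
  induction n with
  | zero => simp [Tfun, laguerre_at_zero]
  | succ n ih =>
    rw [Tfun_succ, ih, laguerre_at_zero, laguerre_at_zero]
    ring

lemma Afun_at_zero : ∀ n : ℕ, Afun n 0 = (1 + (-1:ℝ)^n)/2 := by
  intro n
  induction n with
  | zero => simp [Afun_zero']
  | succ n ih =>
    rw [Afun_succ, laguerre_at_zero, ih, pow_succ]
    ring

end TAux2

namespace THerm
open Finset Polynomial TAux TAux2

/-- probabilists' Hermite polynomials over ℝ. -/
def H : ℕ → Polynomial ℝ
  | 0 => 1
  | n + 1 => Polynomial.X * H n - Polynomial.derivative (H n)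

lemma H_succ (n : ℕ) : H (n+1) = Polynomial.X * H n - Polynomial.derivative (H n) := by
  rw [H]

lemma derivative_H : ∀ n : ℕ, Polynomial.derivative (H (n+1))
    = Polynomial.C ((n:ℝ)+1) * H n := by
  intro n
  induction n with
  | zero =>
    rw [H_succ]
    simp [H]
  | succ n ih =>
    have hc : ((n+1:ℕ):ℝ) = (n:ℝ)+1 := by push_cast; ring
    rw [H_succ (n+1)]
    rw [derivative_sub, derivative_mul, derivative_X, one_mul, ih, derivative_C_mul]
    rw [H_succ n, hc]
    simp only [Polynomial.C_add, Polynomial.C_1]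
    ring

def he (n : ℕ) (a : ℝ) : ℝ := (H n).eval a

lemma he_zero (a : ℝ) : he 0 a = 1 := by simp [he, H]

lemma he_one (a : ℝ) : he 1 a = a := by
  simp [he, H_succ, H]

lemma he_succ (n : ℕ) (a : ℝ) :
    he (n+1) a = a * he n a - (Polynomial.derivative (H n)).eval a := by
  rw [he, H_succ]
  simp [he]

lemma eval_derivative_H (n : ℕ) (a : ℝ) :
    (Polynomial.derivative (H (n+1))).eval a = ((n:ℝ)+1) * he n a := by
  rw [derivative_H]
  simp [he]

lemma hasDerivAt_he (n : ℕ) (a : ℝ) :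
    HasDerivAt (fun y => he n y) ((Polynomial.derivative (H n)).eval a) a :=
  Polynomial.hasDerivAt (H n) a

def c (j : ℕ) : ℝ := (he j 0)^2 / (j.factorial : ℝ)

lemma c_nonneg (j : ℕ) : 0 ≤ c j := by
  rw [c]; positivity

lemma c_zero : c 0 = 1 := by simp [c, he_zero]

lemma c_one : c 1 = 0 := by simp [c, he_one]

lemma he_succ_succ_zero (n : ℕ) : he (n+2) 0 = -((n:ℝ)+1) * he n 0 := by
  rw [he_succ (n+1), eval_derivative_H]
  ring

lemma c_succ_succ (n : ℕ) : c (n+2) = c n * ((n:ℝ)+1) / ((n:ℝ)+2) := by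
  rw [c, c, he_succ_succ_zero]
  have h1 : ((n+2).factorial : ℝ) = ((n:ℝ)+2) * (((n:ℝ)+1) * (n.factorial : ℝ)) := by
    rw [Nat.factorial_succ, Nat.factorial_succ]; push_cast; ring
  rw [h1]
  have h2 : (n.factorial : ℝ) ≠ 0 := by positivity
  have h3 : ((n:ℝ)+1) ≠ 0 := by positivity
  have h4 : ((n:ℝ)+2) ≠ 0 := by positivity
  field_simp

lemma c_odd : ∀ k : ℕ, c (2*k+1) = 0 := by
  intro k
  induction k with
  | zero => exact c_one
  | succ k ih =>
    have : 2*(k+1)+1 = (2*k+1)+2 := by ring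
    rw [this, c_succ_succ, ih]
    ring

def R (n : ℕ) (a : ℝ) : ℝ :=
  ∑ i ∈ Finset.range (n+1), (he i a)^2 / (i.factorial : ℝ) * c (n - i)

def DR (n : ℕ) (a : ℝ) : ℝ :=
  ∑ i ∈ Finset.range n, 2 * he (i+1) a * he i a / (i.factorial : ℝ) * c (n - (i+1))

lemma sum_deriv_form (n : ℕ) (a : ℝ) :
    ∑ i ∈ Finset.range (n+1),
      2 * (Polynomial.derivative (H i)).eval a * he i a / (i.factorial : ℝ) * c (n - i)
    = DR n a := by
  rw [Finset.sum_range_succ']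
  have h0 : 2 * (Polynomial.derivative (H 0)).eval a * he 0 a / ((Nat.factorial 0 : ℕ) : ℝ)
      * c (n - 0) = 0 := by
    simp [H]
  rw [h0, add_zero, DR]
  apply Finset.sum_congr rfl
  intro i _
  rw [eval_derivative_H]
  have hfac : (((i+1).factorial : ℕ) : ℝ) = ((i:ℝ)+1) * (i.factorial : ℝ) := by
    rw [Nat.factorial_succ]; push_cast; ring
  rw [hfac]
  have h2 : (i.factorial : ℝ) ≠ 0 := by positivity
  have h3 : ((i:ℝ)+1) ≠ 0 := by positivity
  field_simp

lemma hasDerivAt_R (n : ℕ) (a : ℝ) :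
    HasDerivAt (fun y => R n y) (DR n a) a := by
  have h : HasDerivAt (fun y => R n y)
      (∑ i ∈ Finset.range (n+1),
        ((2:ℕ) * (he i a)^(2-1) * (Polynomial.derivative (H i)).eval a) / (i.factorial : ℝ)
          * c (n - i)) a := by
    apply HasDerivAt.fun_sum
    intro i _
    exact (((hasDerivAt_he i a).pow 2).div_const _).mul_const _
  have hsum : (∑ i ∈ Finset.range (n+1),
      ((2:ℕ) * (he i a)^(2-1) * (Polynomial.derivative (H i)).eval a) / (i.factorial : ℝ)
        * c (n - i)) = DR n a := by
    rw [← sum_deriv_form n a]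
    apply Finset.sum_congr rfl
    intro i _
    push_cast
    ring
  rw [← hsum]
  exact h

lemma DR_succ (n : ℕ) (a : ℝ) : DR (n+1) a = 2 * a * R n a - DR n a := by
  have h1 : DR (n+1) a = ∑ i ∈ Finset.range (n+1),
      2 * he (i+1) a * he i a / (i.factorial : ℝ) * c (n - i) := by
    rw [DR]
    apply Finset.sum_congr rfl
    intro i _
    have hni : n + 1 - (i+1) = n - i := by omega
    rw [hni]
  rw [h1]
  have h2 : ∀ i ∈ Finset.range (n+1),
      2 * he (i+1) a * he i a / (i.factorial : ℝ) * c (n - i)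
      = 2 * a * ((he i a)^2 / (i.factorial : ℝ) * c (n - i))
        - 2 * (Polynomial.derivative (H i)).eval a * he i a / (i.factorial : ℝ) * c (n - i) := by
    intro i _
    rw [he_succ]
    ring
  rw [Finset.sum_congr rfl h2, Finset.sum_sub_distrib, ← Finset.mul_sum, sum_deriv_form, ← R]

end THerm

namespace TConv
open Finset TAux TAux2 THerm

def s (k : ℕ) : ℝ := c (2*k)

lemma s_zero : s 0 = 1 := by simp [s, c_zero]

lemma s_nonneg (k : ℕ) : 0 ≤ s k := c_nonneg _

lemma s_weight (k : ℕ) : ((k:ℝ)+1) * s (k+1) = ((k:ℝ)+1/2) * s k := by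
  have h : 2*(k+1) = 2*k+2 := by ring
  rw [s, s, h, c_succ_succ]
  push_cast
  have h2 : ((2:ℝ)*(k:ℝ)+2) ≠ 0 := by positivity
  field_simp

def S (m : ℕ) : ℝ := ∑ k ∈ Finset.range (m+1), s k * s (m - k)

lemma two_weighted (m : ℕ) :
    2 * (∑ k ∈ Finset.range (m+1), (k:ℝ) * (s k * s (m - k))) = (m:ℝ) * S m := by
  have hrefl := Finset.sum_range_reflect (fun k => (k:ℝ) * (s k * s (m - k))) (m+1)
  have hco : ∀ k ∈ Finset.range (m+1),
      ((m+1-1-k:ℕ):ℝ) * (s (m+1-1-k) * s (m - (m+1-1-k)))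
      = ((m:ℝ) - (k:ℝ)) * (s k * s (m - k)) := by
    intro k hk
    have hk' : k ≤ m := Nat.lt_succ_iff.mp (Finset.mem_range.mp hk)
    have h1 : m+1-1-k = m-k := by omega
    have h2 : m - (m-k) = k := by omega
    rw [h1, h2, Nat.cast_sub hk']
    ring
  rw [Finset.sum_congr rfl hco] at hrefl
  have hsplit : ∑ k ∈ Finset.range (m+1), ((m:ℝ) - (k:ℝ)) * (s k * s (m - k))
      = (m:ℝ) * S m - ∑ k ∈ Finset.range (m+1), (k:ℝ) * (s k * s (m - k)) := by
    rw [S, Finset.mul_sum, ← Finset.sum_sub_distrib]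
    apply Finset.sum_congr rfl
    intro k _
    ring
  rw [hsplit] at hrefl
  linarith [hrefl]

lemma S_succ (m : ℕ) : S (m+1) = S m := by
  have h1 := two_weighted (m+1)
  have h0 := two_weighted m
  have h2 : ∑ k ∈ Finset.range (m+1+1), (k:ℝ) * (s k * s (m+1 - k))
      = ∑ k ∈ Finset.range (m+1), (((k:ℝ)+1/2) * s k) * s (m - k) := by
    rw [Finset.sum_range_succ']
    simp only [Nat.cast_zero, zero_mul, add_zero]
    apply Finset.sum_congr rfl
    intro k _
    have hidx : m+1-(k+1) = m-k := by omega
    rw [hidx, ← s_weight]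
    push_cast
    ring
  have h3 : ∑ k ∈ Finset.range (m+1), (((k:ℝ)+1/2) * s k) * s (m - k)
      = (∑ k ∈ Finset.range (m+1), (k:ℝ) * (s k * s (m - k))) + (1/2) * S m := by
    rw [S, Finset.mul_sum, ← Finset.sum_add_distrib]
    apply Finset.sum_congr rfl
    intro k _
    ring
  rw [h2, h3] at h1
  push_cast at h1
  have hm1 : ((m:ℝ)+1) ≠ 0 := by positivity
  apply mul_left_cancel₀ hm1
  nlinarith [h0, h1]

lemma S_eq_one : ∀ m : ℕ, S m = 1 := by
  intro m
  induction m with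
  | zero => simp [S, s_zero]
  | succ m ih => rw [S_succ, ih]

lemma sum_even_only (g : ℕ → ℝ) (hodd : ∀ k : ℕ, g (2*k+1) = 0) :
    ∀ M : ℕ, ∑ i ∈ Finset.range (2*M+1), g i = ∑ k ∈ Finset.range (M+1), g (2*k) := by
  intro M
  induction M with
  | zero => simp
  | succ M ih =>
    have hidx : 2*(M+1)+1 = (2*M+1)+1+1 := by ring
    rw [hidx, Finset.sum_range_succ, Finset.sum_range_succ, ih, hodd M]
    have h2 : 2*M+1+1 = 2*(M+1) := by ring
    rw [h2, Finset.sum_range_succ (fun x => g (2*x)) (M+1),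
      Finset.sum_range_succ (fun x => g (2*x)) M]
    ring

lemma conv_c (m : ℕ) : ∑ i ∈ Finset.range (m+1), c i * c (m - i) = (1 + (-1:ℝ)^m)/2 := by
  rcases Nat.even_or_odd m with ⟨M, hM⟩ | ⟨M, hM⟩
  · -- even case: m = M + M
    have hm : m = 2*M := by omega
    subst hm
    have hpow : (-1:ℝ)^(2*M) = 1 := (even_two_mul M).neg_one_pow
    rw [hpow]
    have hodd : ∀ k : ℕ, c (2*k+1) * c (2*M - (2*k+1)) = 0 := by
      intro k
      rw [c_odd k]
      ring
    rw [sum_even_only (fun i => c i * c (2*M - i)) hodd M]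
    have hco : ∀ k ∈ Finset.range (M+1), c (2*k) * c (2*M - 2*k) = s k * s (M - k) := by
      intro k hk
      have hk' : k ≤ M := Nat.lt_succ_iff.mp (Finset.mem_range.mp hk)
      have h1 : 2*M - 2*k = 2*(M-k) := by omega
      rw [h1, s, s]
    rw [Finset.sum_congr rfl hco]
    have := S_eq_one M
    rw [S] at this
    rw [this]
    norm_num
  · -- odd case: m = 2M+1
    have hm : m = 2*M+1 := by omega
    subst hm
    have hpow : (-1:ℝ)^(2*M+1) = -1 := (odd_two_mul_add_one M).neg_one_pow
    rw [hpow]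
    rw [Finset.sum_eq_zero]
    · norm_num
    · intro i hi
      rcases Nat.even_or_odd i with ⟨k, hk⟩ | ⟨k, hk⟩
      · have hik : i = 2*k := by omega
        have hile : i ≤ 2*M+1 := Nat.lt_succ_iff.mp (Finset.mem_range.mp hi)
        have h1 : 2*M+1-i = 2*(M-k)+1 := by omega
        rw [h1, c_odd]
        ring
      · have hik : i = 2*k+1 := by omega
        rw [hik, c_odd]
        ring

lemma R_at_zero (m : ℕ) : R m 0 = (1 + (-1:ℝ)^m)/2 := by
  rw [R, ← conv_c m]
  apply Finset.sum_congr rfl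
  intro i _
  simp [c]

end TConv

namespace TMain
open Finset TAux TAux2 THerm TConv

lemma R_eq_A : ∀ n : ℕ, ∀ a : ℝ, R n a = Afun n (a^2) := by
  intro n
  induction n with
  | zero =>
    intro a
    rw [Afun_zero']
    rw [R]
    simp [he_zero, c_zero]
  | succ n ih =>
    have hfun : (fun y => R n y) = (fun y => Afun n (y^2)) := funext ih
    have hkey : ∀ a : ℝ, HasDerivAt (fun y => R (n+1) y - Afun (n+1) (y^2)) 0 a := by
      intro a
      have hR := hasDerivAt_R (n+1) a
      have hsq : HasDerivAt (fun y : ℝ => y^2) (2*a) a := by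
        simpa using hasDerivAt_pow 2 a
      have hA : HasDerivAt (fun y => Afun (n+1) (y^2)) (dA (n+1) (a^2) * (2*a)) a :=
        by have := HasDerivAt.comp a (hasDerivAt_Afun (n+1) (a^2)) hsq; exact this
      have hA2 : HasDerivAt (fun y => Afun n (y^2)) (dA n (a^2) * (2*a)) a :=
        by have := HasDerivAt.comp a (hasDerivAt_Afun n (a^2)) hsq; exact this
      rw [← hfun] at hA2
      have heq : DR n a = dA n (a^2) * (2*a) := (hasDerivAt_R n a).unique hA2
      have hDR : DR (n+1) a = dA (n+1) (a^2) * (2*a) := by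
        rw [DR_succ, dA_rec, heq, ih a]
        ring
      have hsub := hR.sub hA
      rw [hDR, sub_self] at hsub
      exact hsub
    intro a
    have hconst := is_const_of_deriv_eq_zero (𝕜 := ℝ)
      (f := fun y => R (n+1) y - Afun (n+1) (y^2))
      (fun y => (hkey y).differentiableAt)
      (fun y => (hkey y).deriv) a 0
    have h0 : R (n+1) 0 - Afun (n+1) ((0:ℝ)^2) = 0 := by
      have hz : ((0:ℝ)^2) = 0 := by norm_num
      rw [hz, R_at_zero, Afun_at_zero]
      ring
    rw [h0] at hconst
    linarith [hconst]

lemma Afun_nonneg (n : ℕ) {x : ℝ} (hx : 0 ≤ x) : 0 ≤ Afun n x := by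
  have h : Afun n x = R n (Real.sqrt x) := by
    rw [R_eq_A n (Real.sqrt x), Real.sq_sqrt hx]
  rw [h, R]
  apply Finset.sum_nonneg
  intro i _
  have hc := c_nonneg (n - i)
  positivity

end TMain

theorem T_ge_half (n : ℕ) (X : ℝ) (hX : 0 ≤ X) : 1 / 2 ≤ Tfun n X := by
  have hmono : MonotoneOn (Tfun n) (Set.Ici (0:ℝ)) := by
    apply monotoneOn_of_deriv_nonneg (convex_Ici 0)
    · exact fun x _ =>
        (TAux2.hasDerivAt_Tfun n x).differentiableAt.continuousAt.continuousWithinAt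
    · exact fun x _ => (TAux2.hasDerivAt_Tfun n x).differentiableAt.differentiableWithinAt
    · intro x hx
      rw [interior_Ici] at hx
      rw [(TAux2.hasDerivAt_Tfun n x).deriv]
      cases n with
      | zero => rw [TAux2.dT_zero]
      | succ m =>
        rw [TAux2.dT_succ m x]
        have hx0 : (0:ℝ) ≤ x := le_of_lt hx
        have := TMain.Afun_nonneg m hx0
        linarith
  have h := hmono (Set.self_mem_Ici) (Set.mem_Ici.mpr hX) hX
  rw [TAux2.Tfun_at_zero n] at h
  exact h
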